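/- Let X be a finite set and n a positive integer. For every pmf p on X there exists a pmf p' on X with n·p'(x) ∈ ℤ for all x ∈ X and |p(x) - p'(x)| ≤ 1/n for all x ∈ X. -/

import Mathlib

/-- Type approximation (Lemma 3): for every pmf `p` on a finite set `X` and
every positive integer `n` there is a type `p'` with denominator `n`
(`n·p'(x) ∈ ℤ`) such that `|p x - p' x| ≤ 1/n` for all `x`. -/
theorem stmt8 {X : Type*} [Fintype X] (n : ℕ) (hn : 0 < n)
    (p : X → ℝ) (hp0 : ∀ x, 0 ≤ p x) (hp1 : ∑ x, p x = 1) :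
    ∃ p' : X → ℝ, (∀ x, 0 ≤ p' x) ∧ (∑ x, p' x = 1) ∧
      (∀ x, ∃ k : ℤ, (n : ℝ) * p' x = k) ∧
      (∀ x, |p x - p' x| ≤ 1 / n) := by
  classical
  set m := Fintype.card X with hm
  have e := Fintype.equivFin X
  have hnR : (0:ℝ) < (n:ℝ) := by exact_mod_cast hn
  set g : ℕ → ℝ := fun j => if h : j < m then p (e.symm ⟨j, h⟩) else 0 with hg
  have hg0 : ∀ j, 0 ≤ g j := by
    intro j; simp only [hg]; split <;> [exact hp0 _; exact le_refl 0]
  set S : ℕ → ℝ := fun k => ∑ j ∈ Finset.range k, g j with hS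
  have hSmono : Monotone S := by
    intro a b hab
    exact Finset.sum_le_sum_of_subset_of_nonneg (Finset.range_subset_range.mpr hab)
      (fun i _ _ => hg0 i)
  have hSm : S m = 1 := by
    have h1 : S m = ∑ i : Fin m, g i := Finset.sum_range _
    have h2 : ∀ i : Fin m, g i = p (e.symm i) := by
      intro i; simp only [hg]; rw [dif_pos i.isLt]
    rw [h1]
    calc ∑ i : Fin m, g i = ∑ i : Fin m, p (e.symm i) := by
          exact Finset.sum_congr rfl (fun i _ => h2 i)
      _ = ∑ x, p x := Equiv.sum_comp e.symm p
      _ = 1 := hp1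
  set F : ℕ → ℤ := fun k => ⌊(n:ℝ) * S k⌋ with hF
  have hFmono : Monotone F := fun a b hab =>
    Int.floor_le_floor (by
      exact mul_le_mul_of_nonneg_left (hSmono hab) (le_of_lt hnR))
  refine ⟨fun x => ((F (e x + 1) - F (e x) : ℤ) : ℝ) / n, ?_, ?_, ?_, ?_⟩
  · intro x
    apply div_nonneg _ (le_of_lt hnR)
    have : F (e x) ≤ F (e x + 1) := hFmono (Nat.le_succ _)
    exact_mod_cast sub_nonneg.mpr this
  · have htel : ∑ i ∈ Finset.range m, (((F (i+1) : ℤ) : ℝ) - ((F i : ℤ) : ℝ))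
        = ((F m : ℤ) : ℝ) - ((F 0 : ℤ) : ℝ) :=
      Finset.sum_range_sub (fun k => ((F k : ℤ) : ℝ)) m
    have hF0 : F 0 = 0 := by simp [hF, hS]
    have hFm : F m = n := by
      simp [hF, hSm]
    calc ∑ x, ((F (e x + 1) - F (e x) : ℤ) : ℝ) / n
        = ∑ i : Fin m, ((F (i + 1) - F (i) : ℤ) : ℝ) / n :=
          Equiv.sum_comp e (fun i : Fin m => ((F (i + 1) - F (i) : ℤ) : ℝ) / n)
      _ = (∑ i ∈ Finset.range m, (((F (i+1) : ℤ) : ℝ) - ((F i : ℤ) : ℝ))) / n := by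
          rw [← Finset.sum_div, ← Finset.sum_range
            (fun i => ((F (i + 1) - F i : ℤ) : ℝ))]
          push_cast
          ring_nf
      _ = 1 := by rw [htel, hF0, hFm]; push_cast; field_simp; simp
  · intro x
    refine ⟨F (e x + 1) - F (e x), ?_⟩
    field_simp
  · intro x
    have hlt : (e x : ℕ) < m := (e x).isLt
    have hgx : g (e x) = p x := by
      simp only [hg]; rw [dif_pos hlt]
      simp [Fin.eta]
    have hab : (n:ℝ) * S ((e x : ℕ) + 1) - (n:ℝ) * S (e x) = n * p x := by
      have : S ((e x : ℕ) + 1) - S (e x) = g (e x) := by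
        simp [hS, Finset.sum_range_succ]
      rw [← mul_sub, this, hgx]
    set a := (n:ℝ) * S ((e x : ℕ) + 1) with ha
    set b := (n:ℝ) * S (e x) with hb
    have hpx : p x = (a - b) / n := by rw [hab]; field_simp
    have hcast : ((F (e x + 1) - F (e x) : ℤ) : ℝ) = (⌊a⌋:ℝ) - ⌊b⌋ := by
      push_cast; rfl
    have hdiff : p x - ((F (e x + 1) - F (e x) : ℤ) : ℝ) / n
        = ((a - ⌊a⌋) - (b - ⌊b⌋)) / n := by
      rw [hcast, hpx]; ring
    rw [hdiff, abs_div, abs_of_pos hnR, div_le_div_iff₀ hnR hnR,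
      one_mul]
    have h1 : a - ⌊a⌋ < 1 := by
      have := Int.lt_floor_add_one a; linarith
    have h2 : 0 ≤ a - ⌊a⌋ := by have := Int.floor_le a; linarith
    have h3 : b - ⌊b⌋ < 1 := by
      have := Int.lt_floor_add_one b; linarith
    have h4 : 0 ≤ b - ⌊b⌋ := by have := Int.floor_le b; linarith
    have habs : |a - ⌊a⌋ - (b - ⌊b⌋)| ≤ 1 := by
      rw [abs_le]; constructor <;> linarith
    nlinarith [habs, hnR]
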